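/- Let a ∈ ℂ, a ≠ 0, and let y_1 ∈ ℂ with y_1 ≠ 0, y_1 ≠ a, and y_1/(y_1 - a) not a root of unity. Define h_r(x) = a·x^r/(x^r - (x-a)^r) for integer r > 1, and y_{k+1} = h_r(y_k). Then for all k ≥ 1, y_k - a = a / ((y_1/(y_1 - a))^{r^{k-1}} - 1). -/

import Mathlib

theorem stmt_5 (a : ℂ) (ha : a ≠ 0) (y1 : ℂ) (hy0 : y1 ≠ 0) (hya : y1 ≠ a)
    (hroot : ¬ ∃ p : ℕ, 0 < p ∧ (y1 / (y1 - a)) ^ p = 1)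
    (r : ℕ) (hr : 1 < r) (y : ℕ → ℂ) (hy1 : y 1 = y1)
    (hrec : ∀ k ≥ 1, y (k + 1) = a * (y k) ^ r / ((y k) ^ r - (y k - a) ^ r)) :
    ∀ k ≥ 1, y k - a = a / ((y1 / (y1 - a)) ^ (r ^ (k - 1)) - 1) := by
  set q := y1 / (y1 - a) with hq
  have hy1a : y1 - a ≠ 0 := sub_ne_zero.mpr hya
  have hqn : ∀ n : ℕ, 0 < n → q ^ n ≠ 1 := fun n hn h => hroot ⟨n, hn, h⟩
  have key : ∀ k, 1 ≤ k → (y k - a ≠ 0 ∧ y k / (y k - a) = q ^ (r ^ (k - 1))) := by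
    intro k hk
    induction k, hk using Nat.le_induction with
    | base =>
      refine ⟨by rw [hy1]; exact hy1a, ?_⟩
      simp [hy1, hq]
    | succ k hk ih =>
      obtain ⟨hne, heq⟩ := ih
      set m := r ^ (k - 1) with hm
      have hmpos : 0 < m := pow_pos (by omega) _
      have hy : y k = q ^ m * (y k - a) := by
        rw [← heq]; field_simp
      have hyk_r : (y k) ^ r = q ^ (m * r) * (y k - a) ^ r := by
        conv_lhs => rw [hy]
        rw [mul_pow, ← pow_mul]
      have hD : (y k) ^ r - (y k - a) ^ r = (y k - a) ^ r * (q ^ (m * r) - 1) := by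
        rw [hyk_r]; ring
      have hDne : (y k) ^ r - (y k - a) ^ r ≠ 0 := by
        rw [hD]
        exact mul_ne_zero (pow_ne_zero _ hne)
          (sub_ne_zero.mpr (hqn (m * r) (by positivity)))
      have hsub : y (k + 1) - a = a * (y k - a) ^ r / ((y k) ^ r - (y k - a) ^ r) := by
        rw [hrec k hk]
        field_simp
        ring
      have hne' : y (k + 1) - a ≠ 0 := by
        rw [hsub]
        exact div_ne_zero (mul_ne_zero ha (pow_ne_zero _ hne)) hDne
      have hnum : y (k + 1) = q ^ (m * r) * (y (k + 1) - a) := by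
        rw [hsub, hrec k hk, hyk_r]
        ring
      have hmr : m * r = r ^ ((k + 1) - 1) := by
        rw [hm, ← pow_succ]
        congr 1
        omega
      refine ⟨hne', ?_⟩
      rw [← hmr, div_eq_iff hne']
      exact hnum
  intro k hk
  obtain ⟨hne, heq⟩ := key k hk
  have h1 : q ^ (r ^ (k - 1)) - 1 = a / (y k - a) := by
    rw [← heq]; field_simp; ring
  rw [h1]
  field_simp
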